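/- Let A = A_{n+1}(ℂ) be the Weyl algebra and let 𝒟 be the ℂ-span of differential monomials Q^μP^ν with μ ∈ ℕⁿ × ℤ, ν ∈ ℕ^{n+1} (allowing negative powers of Q_{n+1} only), subject to Σ_{i=1}^n(μ_i − ν_i) − 2(μ_{n+1} − ν_{n+1}) = 0. Then 𝒟 is generated as a ℂ-algebra by 1 and the elements Q_iP_j, Q_{n+1}P_{n+1}, Q_iQ_jQ_{n+1}, P_iP_jQ_{n+1}^{−1} for i,j = 1,…,n. -/

import Mathlib

/-- `q ^ k` for an integer exponent `k`, realized via a chosen inverse `qinv`. -/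
def zmonPow {A : Type*} [Ring A] (q qinv : A) (k : ℤ) : A :=
  if 0 ≤ k then q ^ k.toNat else qinv ^ (-k).toNat

namespace Stmt11Aux




variable {A : Type*} [Ring A]

/-- product of `f i ^ g i` over `List.range m`. -/
def pp (f : ℕ → A) (g : ℕ → ℕ) (m : ℕ) : A :=
  ((List.range m).map fun i => f i ^ g i).prod

lemma pp_succ (f : ℕ → A) (g : ℕ → ℕ) (m : ℕ) :
    pp f g (m + 1) = pp f g m * f m ^ g m :=
  List.prod_range_succ _ m

lemma pp_congr {f : ℕ → A} {g g' : ℕ → ℕ} {m : ℕ} (h : ∀ i < m, g i = g' i) :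
    pp f g m = pp f g' m := by
  unfold pp
  congr 1
  exact List.map_congr_left fun i hi => by rw [h i (List.mem_range.mp hi)]

lemma pp_zero_exp {f : ℕ → A} {g : ℕ → ℕ} {m : ℕ} (h : ∀ i < m, g i = 0) :
    pp f g m = 1 := by
  induction m with
  | zero => rfl
  | succ m ih =>
      rw [pp_succ, ih fun i hi => h i (Nat.lt_succ_of_lt hi), h m (Nat.lt_succ_self m)]
      simp

lemma commute_pp {x : A} {f : ℕ → A} {g : ℕ → ℕ} {m : ℕ}
    (h : ∀ i < m, Commute x (f i)) : Commute x (pp f g m) := by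
  induction m with
  | zero => exact Commute.one_right x
  | succ m ih =>
      rw [pp_succ]
      exact (ih fun i hi => h i (Nat.lt_succ_of_lt hi)).mul_right
        ((h m (Nat.lt_succ_self m)).pow_right _)

lemma pp_update_congr {f : ℕ → A} {g : ℕ → ℕ} {m j v : ℕ} (hj : m ≤ j) :
    pp f (Function.update g j v) m = pp f g m :=
  pp_congr fun i hi => Function.update_of_ne (show i ≠ j by omega) _ _

lemma pp_peel {f : ℕ → A} {g : ℕ → ℕ} {m j : ℕ} (hj : j < m) (hgj : g j ≠ 0)
    (hc : ∀ i, j < i → i < m → Commute (f j) (f i)) :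
    pp f g m = pp f (Function.update g j (g j - 1)) m * f j := by
  induction m with
  | zero => omega
  | succ m ih =>
      rcases Nat.lt_succ_iff_lt_or_eq.mp hj with hj' | hj'
      · have hu : Function.update g j (g j - 1) m = g m :=
          Function.update_of_ne (show m ≠ j by omega) _ _
        rw [pp_succ, pp_succ, hu, ih hj' (fun i h1 h2 => hc i h1 (Nat.lt_succ_of_lt h2)),
          mul_assoc, ((hc m hj' (Nat.lt_succ_self m)).pow_right (g m)).eq, ← mul_assoc]
      · subst hj'
        rw [pp_succ, pp_succ, pp_update_congr le_rfl, Function.update_self, mul_assoc]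
        congr 1
        conv_lhs => rw [show g j = (g j - 1) + 1 by omega]
        rw [pow_succ]

lemma pp_unpeel {f : ℕ → A} {g : ℕ → ℕ} {m j : ℕ} (hj : j < m)
    (hc : ∀ i < j, Commute (f j) (f i)) :
    f j * pp f g m = pp f (Function.update g j (g j + 1)) m := by
  induction m with
  | zero => omega
  | succ m ih =>
      rcases Nat.lt_succ_iff_lt_or_eq.mp hj with hj' | hj'
      · have hu : Function.update g j (g j + 1) m = g m :=
          Function.update_of_ne (show m ≠ j by omega) _ _
        rw [pp_succ, pp_succ, hu, ← mul_assoc, ih hj']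
      · subst hj'
        have hcp : Commute (f j) (pp f g j) := commute_pp fun i hi => hc i hi
        rw [pp_succ, pp_succ, pp_update_congr le_rfl, Function.update_self,
          ← mul_assoc, hcp.eq, mul_assoc, ← pow_succ']

/-- passing `x` across a product, when `x` commutes with all factors except at `j`,
where `x * f j ^ c = f j ^ c * x + c • f j ^ (c-1)`. -/
lemma pp_pass {x : A} {f : ℕ → A} {g : ℕ → ℕ} {m j : ℕ} (hj : j < m)
    (hcomm : ∀ i < m, i ≠ j → Commute x (f i))
    (hx : ∀ c : ℕ, x * f j ^ c = f j ^ c * x + c • f j ^ (c - 1)) :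
    x * pp f g m = pp f g m * x + g j • pp f (Function.update g j (g j - 1)) m := by
  induction m with
  | zero => omega
  | succ m ih =>
      rcases Nat.lt_succ_iff_lt_or_eq.mp hj with hj' | hj'
      · have hcm : Commute x (f m ^ g m) :=
          (hcomm m (Nat.lt_succ_self m) (by omega)).pow_right _
        have hu : Function.update g j (g j - 1) m = g m :=
          Function.update_of_ne (show m ≠ j by omega) _ _
        rw [pp_succ, pp_succ, hu, ← mul_assoc,
          ih hj' (fun i h1 h2 => hcomm i (Nat.lt_succ_of_lt h1) h2),
          add_mul, smul_mul_assoc, mul_assoc, hcm.eq, ← mul_assoc]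
      · subst hj'
        have hcp : Commute x (pp f g j) :=
          commute_pp fun i hi => hcomm i (Nat.lt_succ_of_lt hi) (by omega)
        rw [pp_succ, pp_succ, pp_update_congr le_rfl, Function.update_self,
          ← mul_assoc, hcp.eq, mul_assoc, hx (g j), mul_add, ← mul_assoc, mul_smul_comm]

lemma pp_add {f : ℕ → A} {g g' : ℕ → ℕ} {m : ℕ}
    (hc : ∀ i < m, ∀ j < m, Commute (f i) (f j)) :
    pp f (fun i => g i + g' i) m = pp f g m * pp f g' m := by
  induction m with
  | zero => simp [pp]
  | succ m ih =>
      have h1 : Commute (f m ^ g m) (pp f g' m) :=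
        (commute_pp (x := f m) fun i hi =>
          hc m (Nat.lt_succ_self m) i (Nat.lt_succ_of_lt hi)).pow_left _
      rw [pp_succ, pp_succ, pp_succ, ih (fun i hi j hj =>
          hc i (Nat.lt_succ_of_lt hi) j (Nat.lt_succ_of_lt hj)), pow_add]
      simp only [mul_assoc]
      rw [← mul_assoc (f m ^ g m), h1.eq, mul_assoc]




variable {A : Type*} [Ring A]

lemma pp_single {f : ℕ → A} {j m : ℕ} (hj : j < m)
    (hc : ∀ i, j < i → i < m → Commute (f j) (f i)) :
    pp f (Function.update (fun _ => 0) j 1) m = f j := by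
  have h1 : pp f (Function.update (Function.update (fun _ => 0) j 1) j
      ((Function.update (fun _ => 0) j 1) j - 1)) m = 1 :=
    pp_zero_exp fun i hi => by
      rcases eq_or_ne i j with h | h
      · subst h
        simp
      · rw [Function.update_of_ne h, Function.update_of_ne h]
  rw [pp_peel hj (by simp) hc, h1, one_mul]

lemma pp_double {f : ℕ → A} {i j m : ℕ} (hi : i < m) (hj : j < m)
    (hc : ∀ a < m, ∀ b < m, Commute (f a) (f b)) :
    pp f (fun l => Function.update (fun _ => 0) i 1 l + Function.update (fun _ => 0) j 1 l) m
      = f i * f j := by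
  rw [pp_add hc, pp_single hi fun a h1 h2 => hc _ hi _ h2,
    pp_single hj fun a h1 h2 => hc _ hj _ h2]

/-- `p * q^m = q^m * p + m • q^(m-1)` from `[p,q] = 1`. -/
lemma p_pow {p q : A} (h : p * q = q * p + 1) (m : ℕ) :
    p * q ^ m = q ^ m * p + m • q ^ (m - 1) := by
  induction m with
  | zero => simp
  | succ m ih =>
      have hq : (m • q ^ (m - 1)) * q = m • q ^ m := by
        cases m with
        | zero => simp
        | succ m => rw [smul_mul_assoc, ← pow_succ]; simp
      rw [pow_succ, ← mul_assoc, ih, add_mul, mul_assoc, h, mul_add, mul_one, hq,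
        Nat.add_sub_cancel, succ_nsmul, ← mul_assoc, ← pow_succ]
      abel

/-- the unit made from `q` and its two-sided inverse. -/
def mku (q qinv : A) (h1 : q * qinv = 1) (h2 : qinv * q = 1) : Aˣ :=
  ⟨q, qinv, h1, h2⟩

lemma zmonPow_eq {q qinv : A} (h1 : q * qinv = 1) (h2 : qinv * q = 1) (k : ℤ) :
    zmonPow q qinv k = ((mku q qinv h1 h2 ^ k : Aˣ) : A) := by
  unfold zmonPow
  split
  · next h =>
      rw [show k = (k.toNat : ℤ) from (Int.toNat_of_nonneg h).symm, zpow_natCast,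
        Units.val_pow_eq_pow_val]
      rfl
  · next h =>
      have hm : k = -(((-k).toNat : ℕ) : ℤ) := by omega
      conv_rhs => rw [hm]
      rw [zpow_neg, zpow_natCast, ← inv_pow, Units.val_pow_eq_pow_val]
      rfl

lemma commute_zpow {a : A} {u : Aˣ} (h1 : Commute a ↑u) (h2 : Commute a ↑u⁻¹) (k : ℤ) :
    Commute a ((u ^ k : Aˣ) : A) := by
  rcases k with m | m
  · rw [Int.ofNat_eq_coe, zpow_natCast, Units.val_pow_eq_pow_val]
    exact h1.pow_right m
  · rw [zpow_negSucc, ← inv_pow, Units.val_pow_eq_pow_val]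
    exact h2.pow_right _

lemma val_zpow_mul (u : Aˣ) (a b : ℤ) :
    ((u ^ a : Aˣ) : A) * ((u ^ b : Aˣ) : A) = ((u ^ (a + b) : Aˣ) : A) := by
  rw [← Units.val_mul, ← zpow_add]

lemma val_zpow_mul_u (u : Aˣ) (a : ℤ) :
    ((u ^ a : Aˣ) : A) * ↑u = ((u ^ (a + 1) : Aˣ) : A) := by
  conv_lhs => rw [show (↑u : A) = ((u ^ (1 : ℤ) : Aˣ) : A) by rw [zpow_one]]
  rw [val_zpow_mul]

lemma val_zpow_mul_uinv (u : Aˣ) (a : ℤ) :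
    ((u ^ a : Aˣ) : A) * ↑u⁻¹ = ((u ^ (a - 1) : Aˣ) : A) := by
  have : (↑u⁻¹ : A) = ((u ^ (-1 : ℤ) : Aˣ) : A) := by rw [zpow_neg_one]
  rw [this, val_zpow_mul, ← sub_eq_add_neg]

/-- `p * u^k = u^k * p + k • u^(k-1)` from `[p, u] = 1`, for integer `k`. -/
lemma p_zpow {p : A} {u : Aˣ} (h : p * u = ↑u * p + 1) (k : ℤ) :
    p * ((u ^ k : Aˣ) : A) = ((u ^ k : Aˣ) : A) * p + k • ((u ^ (k - 1) : Aˣ) : A) := by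
  have hup : (↑u : A) * p = p * ↑u - 1 := by rw [h]; abel
  have hinv : p * ↑u⁻¹ = ↑u⁻¹ * p - ↑u⁻¹ * ↑u⁻¹ := by
    calc p * ↑u⁻¹ = ↑u⁻¹ * ((↑u : A) * (p * ↑u⁻¹)) := by
          rw [← mul_assoc, ← mul_assoc, Units.inv_mul, one_mul]
      _ = ↑u⁻¹ * (((↑u : A) * p) * ↑u⁻¹) := by rw [mul_assoc]
      _ = ↑u⁻¹ * ((p * ↑u - 1) * ↑u⁻¹) := by rw [hup]
      _ = ↑u⁻¹ * (p * (↑u * ↑u⁻¹) - ↑u⁻¹) := by rw [sub_mul, one_mul, mul_assoc]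
      _ = ↑u⁻¹ * p - ↑u⁻¹ * ↑u⁻¹ := by rw [Units.mul_inv, mul_one, mul_sub]
  induction k using Int.induction_on with
  | zero => simp
  | succ i ih =>
      have e1 : ((u ^ ((i : ℤ) + 1) : Aˣ) : A) = ((u ^ (i : ℤ) : Aˣ) : A) * ↑u :=
        (val_zpow_mul_u u i).symm
      rw [e1, ← mul_assoc, ih, add_mul, mul_assoc, h, mul_add, mul_one, smul_mul_assoc,
        val_zpow_mul_u, val_zpow_mul_u]
      have : (i : ℤ) - 1 + 1 = i := by ring
      rw [this, show (i : ℤ) + 1 - 1 = i by ring, add_smul, one_smul,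
        show ((u ^ (i : ℤ) : Aˣ) : A) * (↑u * p) = ((u ^ ((i : ℤ) + 1) : Aˣ) : A) * p by
          rw [← mul_assoc, val_zpow_mul_u]]
      abel
  | pred i ih =>
      have e1 : ((u ^ (-(i : ℤ) - 1) : Aˣ) : A) = ((u ^ (-(i : ℤ)) : Aˣ) : A) * ↑u⁻¹ :=
        (val_zpow_mul_uinv u _).symm
      rw [e1, ← mul_assoc, ih, add_mul, mul_assoc, hinv, mul_sub, ← mul_assoc, ← mul_assoc,
        smul_mul_assoc, val_zpow_mul_uinv, val_zpow_mul_uinv]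
      rw [sub_smul, one_smul]
      abel



section Main
variable {A : Type*} [Ring A]

/-- bundled hypotheses. -/
structure Hyp (Q P : ℕ → A) (Qinv : A) (n : ℕ) : Prop where
  hPQ : ∀ i ≤ n, ∀ j ≤ n, P i * Q j - Q j * P i = if i = j then 1 else 0
  hQQ : ∀ i ≤ n, ∀ j ≤ n, Q i * Q j = Q j * Q i
  hPP : ∀ i ≤ n, ∀ j ≤ n, P i * P j = P j * P i
  hinv : Q n * Qinv = 1
  hinv' : Qinv * Q n = 1
  hinvQ : ∀ i < n, Commute Qinv (Q i)
  hinvP : ∀ i < n, Commute Qinv (P i)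

namespace Hyp

variable {Q P : ℕ → A} {Qinv : A} {n : ℕ} (H : Hyp Q P Qinv n)

include H

/-- the invertible `Q n` as a unit. -/
def u : Aˣ := mku (Q n) Qinv H.hinv H.hinv'

/-- integer powers of `Q n`. -/
def U (k : ℤ) : A := ((H.u ^ k : Aˣ) : A)

lemma u_val : (↑H.u : A) = Q n := rfl

lemma u_inv_val : (↑H.u⁻¹ : A) = Qinv := rfl

lemma zmon_eq (k : ℤ) : zmonPow (Q n) Qinv k = H.U k := zmonPow_eq H.hinv H.hinv' k

lemma U_mul (a b : ℤ) : H.U a * H.U b = H.U (a + b) := val_zpow_mul _ a b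

lemma U_zero : H.U 0 = 1 := by simp [U]

lemma U_one : H.U 1 = Q n := by rw [U, zpow_one]; rfl

lemma U_negone : H.U (-1) = Qinv := by rw [U, zpow_neg, zpow_one]; rfl

lemma Uinv_mul (a : ℤ) : Qinv * H.U a = H.U (-1 + a) := by
  have h := H.U_mul (-1) a
  rw [H.U_negone] at h
  exact h

lemma cQQ {i j : ℕ} (hi : i ≤ n) (hj : j ≤ n) : Commute (Q i) (Q j) :=
  H.hQQ i hi j hj

lemma cPP {i j : ℕ} (hi : i ≤ n) (hj : j ≤ n) : Commute (P i) (P j) :=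
  H.hPP i hi j hj

lemma cPQ {i j : ℕ} (hi : i ≤ n) (hj : j ≤ n) (hij : i ≠ j) : Commute (P i) (Q j) := by
  have := H.hPQ i hi j hj
  rw [if_neg hij] at this
  exact sub_eq_zero.mp this

lemma pq {i : ℕ} (hi : i ≤ n) : P i * Q i = Q i * P i + 1 := by
  have := H.hPQ i hi i hi
  rw [if_pos rfl] at this
  have h2 : P i * Q i - Q i * P i + Q i * P i = 1 + Q i * P i := by rw [this]
  rw [sub_add_cancel] at h2
  rw [h2]
  abel

lemma cQU {i : ℕ} (hi : i < n) (k : ℤ) : Commute (Q i) (H.U k) :=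
  commute_zpow ((H.cQQ (le_of_lt hi) le_rfl)) ((H.hinvQ i hi).symm) k

lemma cQnU (k : ℤ) : Commute (Q n) (H.U k) :=
  commute_zpow (Commute.refl (Q n)) (by rw [u_inv_val]; exact (H.hinv.trans H.hinv'.symm)) k

lemma cPU {i : ℕ} (hi : i < n) (k : ℤ) : Commute (P i) (H.U k) :=
  commute_zpow ((H.cPQ (le_of_lt hi) le_rfl (by omega))) ((H.hinvP i hi).symm) k

lemma PnU (k : ℤ) : P n * H.U k = H.U k * P n + k • H.U (k - 1) :=
  p_zpow (by rw [u_val]; exact H.pq le_rfl) k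

end Hyp

variable [Algebra ℂ A]

/-- the balance (torus weight) of a monomial. -/
def bal (n : ℕ) (μ : ℕ → ℕ) (k : ℤ) (ν : ℕ → ℕ) : ℤ :=
  (∑ i ∈ Finset.range n, ((μ i : ℤ) - (ν i : ℤ))) - 2 * (k - (ν n : ℤ))

/-- a normally ordered monomial. -/
def mon (Q P : ℕ → A) (Qinv : A) (n : ℕ) (μ : ℕ → ℕ) (k : ℤ) (ν : ℕ → ℕ) : A :=
  pp Q μ n * zmonPow (Q n) Qinv k * pp P ν (n + 1)

/-- span of monomials of balance `d`. -/
def DD (Q P : ℕ → A) (Qinv : A) (n : ℕ) (d : ℤ) : Submodule ℂ A :=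
  Submodule.span ℂ {a | ∃ μ k ν, bal n μ k ν = d ∧ a = mon Q P Qinv n μ k ν}

lemma mem_DD {Q P : ℕ → A} {Qinv : A} {n : ℕ} {d : ℤ} (μ : ℕ → ℕ) (k : ℤ) (ν : ℕ → ℕ)
    (hb : bal n μ k ν = d) : mon Q P Qinv n μ k ν ∈ DD Q P Qinv n d :=
  Submodule.subset_span ⟨μ, k, ν, hb, rfl⟩

lemma sum_cast_update (ν : ℕ → ℕ) {j m : ℕ} (hj : j < m) (v : ℕ) :
    ∑ i ∈ Finset.range m, ((Function.update ν j v i : ℕ) : ℤ)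
      = (∑ i ∈ Finset.range m, ((ν i : ℕ) : ℤ)) + (v : ℤ) - (ν j : ℤ) := by
  have hmem : j ∈ Finset.range m := Finset.mem_range.mpr hj
  have e : ∀ i, ((Function.update ν j v i : ℕ) : ℤ)
      = Function.update (fun i => ((ν i : ℕ) : ℤ)) j (v : ℤ) i := by
    intro i
    rcases eq_or_ne i j with h | h
    · subst h
      simp
    · rw [Function.update_of_ne h, Function.update_of_ne h]
  rw [Finset.sum_congr rfl fun i _ => e i, Finset.sum_update_of_mem hmem]
  conv_rhs => rw [Finset.sum_eq_sum_sdiff_singleton_add hmem (fun i => ((ν i : ℕ) : ℤ))]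
  ring

lemma sum_update_nat (ν : ℕ → ℕ) {j m : ℕ} (hj : j < m) (v : ℕ) :
    (∑ i ∈ Finset.range m, Function.update ν j v i) + ν j
      = (∑ i ∈ Finset.range m, ν i) + v := by
  have hmem : j ∈ Finset.range m := Finset.mem_range.mpr hj
  rw [Finset.sum_update_of_mem hmem]
  conv_rhs => rw [Finset.sum_eq_sum_sdiff_singleton_add hmem ν]
  omega

lemma sum_cast_single {m j : ℕ} (hj : j < m) (v : ℕ) :
    ∑ l ∈ Finset.range m, ((Function.update (fun _ => 0) j v l : ℕ) : ℤ) = (v : ℤ) := by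
  simpa using sum_cast_update (fun _ => 0) hj v

lemma bal_eq (n : ℕ) (μ : ℕ → ℕ) (k : ℤ) (ν : ℕ → ℕ) :
    bal n μ k ν = (∑ i ∈ Finset.range n, ((μ i : ℕ) : ℤ))
      - (∑ i ∈ Finset.range n, ((ν i : ℕ) : ℤ)) - 2 * k + 2 * ((ν n : ℕ) : ℤ) := by
  unfold bal
  rw [Finset.sum_sub_distrib]
  ring

lemma bal_update_ν {n : ℕ} (μ : ℕ → ℕ) (k : ℤ) (ν : ℕ → ℕ) {j : ℕ} (hj : j < n) (v : ℕ) :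
    bal n μ k (Function.update ν j v) = bal n μ k ν - (v : ℤ) + (ν j : ℤ) := by
  rw [bal_eq, bal_eq, sum_cast_update ν hj v,
    Function.update_of_ne (show n ≠ j by omega)]
  ring

lemma bal_update_ν_top {n : ℕ} (μ : ℕ → ℕ) (k : ℤ) (ν : ℕ → ℕ) (v : ℕ) :
    bal n μ k (Function.update ν n v) = bal n μ k ν + 2 * (v : ℤ) - 2 * (ν n : ℤ) := by
  have hs : ∑ i ∈ Finset.range n, ((Function.update ν n v i : ℕ) : ℤ)
      = ∑ i ∈ Finset.range n, ((ν i : ℕ) : ℤ) :=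
    Finset.sum_congr rfl fun i hi => by
      rw [Function.update_of_ne (Nat.ne_of_lt (Finset.mem_range.mp hi))]
  rw [bal_eq, bal_eq, Function.update_self, hs]
  ring

lemma bal_update_μ {n : ℕ} (μ : ℕ → ℕ) (k : ℤ) (ν : ℕ → ℕ) {j : ℕ} (hj : j < n) (v : ℕ) :
    bal n (Function.update μ j v) k ν = bal n μ k ν + (v : ℤ) - (μ j : ℤ) := by
  rw [bal_eq, bal_eq, sum_cast_update μ hj v]
  ring

lemma bal_k (n : ℕ) (μ : ℕ → ℕ) (k c : ℤ) (ν : ℕ → ℕ) :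
    bal n μ (k + c) ν = bal n μ k ν - 2 * c := by
  rw [bal_eq, bal_eq]
  ring

namespace Hyp
variable {Q P : ℕ → A} {Qinv : A} {n : ℕ} (H : Hyp Q P Qinv n)
include H

lemma mon_eq (μ : ℕ → ℕ) (k : ℤ) (ν : ℕ → ℕ) :
    mon Q P Qinv n μ k ν = pp Q μ n * H.U k * pp P ν (n + 1) := by
  rw [mon, H.zmon_eq]

lemma monMul_mem : ∀ (N : ℕ) (μ : ℕ → ℕ) (k : ℤ) (ν : ℕ → ℕ) (μ' : ℕ → ℕ) (k' : ℤ) (ν' : ℕ → ℕ),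
    (∑ i ∈ Finset.range (n + 1), ν i) = N →
    mon Q P Qinv n μ k ν * mon Q P Qinv n μ' k' ν'
      ∈ DD Q P Qinv n (bal n μ k ν + bal n μ' k' ν') := by
  intro N
  induction N using Nat.strong_induction_on with
  | _ N ih =>
  intro μ k ν μ' k' ν' hN
  by_cases h0 : ∀ i < n + 1, ν i = 0
  · -- base case : no `P`'s on the left
    have hpν : pp P ν (n + 1) = 1 := pp_zero_exp h0
    have hcQ' : Commute (H.U k) (pp Q μ' n) :=
      commute_pp fun i hi => (H.cQU hi k).symm
    have hkey : mon Q P Qinv n μ k ν * mon Q P Qinv n μ' k' ν'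
        = mon Q P Qinv n (fun i => μ i + μ' i) (k + k') ν' := by
      rw [H.mon_eq μ k ν, H.mon_eq μ' k' ν', H.mon_eq, hpν, mul_one,
        pp_add (fun i hi j hj => H.cQQ (le_of_lt hi) (le_of_lt hj)), ← H.U_mul k k']
      simp only [mul_assoc]
      rw [← mul_assoc (H.U k) (pp Q μ' n), hcQ'.eq]
      simp only [mul_assoc]
    rw [hkey]
    apply mem_DD
    have hνn : ν n = 0 := h0 n (Nat.lt_succ_self n)
    have hs0 : ∑ i ∈ Finset.range n, ((ν i : ℕ) : ℤ) = 0 :=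
      Finset.sum_eq_zero fun i hi => by
        rw [h0 i (Nat.lt_succ_of_lt (Finset.mem_range.mp hi))]; rfl
    have hs : ∑ i ∈ Finset.range n, ((μ i + μ' i : ℕ) : ℤ)
        = ∑ i ∈ Finset.range n, ((μ i : ℕ) : ℤ) + ∑ i ∈ Finset.range n, ((μ' i : ℕ) : ℤ) := by
      push_cast
      rw [Finset.sum_add_distrib]
    rw [bal_eq, bal_eq, bal_eq, hs, hs0, hνn]
    push_cast
    ring
  · push_neg at h0
    obtain ⟨j, hjn1, hνj⟩ := h0
    rcases Nat.lt_succ_iff_lt_or_eq.mp hjn1 with hjn | hjn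
    · -- peel `P j`, `j < n`
      have epeel : pp P ν (n + 1) = pp P (Function.update ν j (ν j - 1)) (n + 1) * P j :=
        pp_peel hjn1 hνj fun i h1 h2 => H.cPP (le_of_lt hjn) (by omega)
      have hsum : (∑ i ∈ Finset.range (n + 1), Function.update ν j (ν j - 1) i) < N := by
        have := sum_update_nat ν hjn1 (ν j - 1)
        omega
      have c3 : P j * pp P ν' (n + 1) = pp P (Function.update ν' j (ν' j + 1)) (n + 1) :=
        pp_unpeel hjn1 fun i hi => H.cPP (le_of_lt hjn) (by omega)
      have hQpass : P j * pp Q μ' n = pp Q μ' n * P j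
          + μ' j • pp Q (Function.update μ' j (μ' j - 1)) n :=
        pp_pass hjn (fun i hi hij => H.cPQ (le_of_lt hjn) (le_of_lt hi) (by omega))
          (p_pow (H.pq (le_of_lt hjn)))
      have cU : Commute (P j) (H.U k') := H.cPU hjn k'
      have hPj : P j * (pp Q μ' n * (H.U k' * pp P ν' (n + 1)))
          = pp Q μ' n * (H.U k' * pp P (Function.update ν' j (ν' j + 1)) (n + 1))
            + μ' j • (pp Q (Function.update μ' j (μ' j - 1)) n * (H.U k' * pp P ν' (n + 1))) := by
        calc P j * (pp Q μ' n * (H.U k' * pp P ν' (n + 1)))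
            = (P j * pp Q μ' n) * (H.U k' * pp P ν' (n + 1)) := by rw [mul_assoc]
          _ = pp Q μ' n * (P j * (H.U k' * pp P ν' (n + 1)))
              + μ' j • (pp Q (Function.update μ' j (μ' j - 1)) n * (H.U k' * pp P ν' (n + 1))) := by
              rw [hQpass, add_mul, smul_mul_assoc, mul_assoc]
          _ = _ := by
              rw [← mul_assoc (P j), cU.eq, mul_assoc, c3]
      have hkey : mon Q P Qinv n μ k ν * mon Q P Qinv n μ' k' ν'
          = mon Q P Qinv n μ k (Function.update ν j (ν j - 1))
              * mon Q P Qinv n μ' k' (Function.update ν' j (ν' j + 1))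
            + μ' j • (mon Q P Qinv n μ k (Function.update ν j (ν j - 1))
              * mon Q P Qinv n (Function.update μ' j (μ' j - 1)) k' ν') := by
        rw [H.mon_eq μ k ν, H.mon_eq μ' k' ν', H.mon_eq μ k _, H.mon_eq μ' k' _,
          H.mon_eq _ k' ν', epeel]
        simp only [mul_assoc]
        rw [hPj]
        simp only [mul_add, mul_smul_comm]
      rw [hkey]
      have hc1 : ((ν j - 1 : ℕ) : ℤ) = (ν j : ℤ) - 1 := by omega
      have hb1 : bal n μ k (Function.update ν j (ν j - 1))
            + bal n μ' k' (Function.update ν' j (ν' j + 1))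
          = bal n μ k ν + bal n μ' k' ν' := by
        rw [bal_update_ν μ k ν hjn, bal_update_ν μ' k' ν' hjn, hc1]
        push_cast
        ring
      have m1 := ih _ hsum μ k (Function.update ν j (ν j - 1)) μ' k'
        (Function.update ν' j (ν' j + 1)) rfl
      rw [hb1] at m1
      by_cases hz : μ' j = 0
      · rw [hz, zero_smul, add_zero]
        exact m1
      · have hb2 : bal n μ k (Function.update ν j (ν j - 1))
              + bal n (Function.update μ' j (μ' j - 1)) k' ν'
            = bal n μ k ν + bal n μ' k' ν' := by
          rw [bal_update_ν μ k ν hjn, bal_update_μ μ' k' ν' hjn, hc1,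
            show ((μ' j - 1 : ℕ) : ℤ) = (μ' j : ℤ) - 1 by omega]
          ring
        have m2 := ih _ hsum μ k (Function.update ν j (ν j - 1))
          (Function.update μ' j (μ' j - 1)) k' ν' rfl
        rw [hb2] at m2
        exact add_mem m1 (nsmul_mem m2 _)
    · -- peel `P n`
      rw [hjn] at hνj
      have epeel : pp P ν (n + 1) = pp P (Function.update ν n (ν n - 1)) (n + 1) * P n :=
        pp_peel (Nat.lt_succ_self n) hνj fun i h1 h2 => absurd h2 (by omega)
      have hsum : (∑ i ∈ Finset.range (n + 1), Function.update ν n (ν n - 1) i) < N := by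
        have := sum_update_nat ν (show n < n + 1 by omega) (ν n - 1)
        omega
      have cPnQ' : Commute (P n) (pp Q μ' n) :=
        commute_pp fun i hi => H.cPQ le_rfl (le_of_lt hi) (by omega)
      have c3 : P n * pp P ν' (n + 1) = pp P (Function.update ν' n (ν' n + 1)) (n + 1) :=
        pp_unpeel (Nat.lt_succ_self n) fun i hi => H.cPP le_rfl (le_of_lt hi)
      have hPn : P n * (pp Q μ' n * (H.U k' * pp P ν' (n + 1)))
          = pp Q μ' n * (H.U k' * pp P (Function.update ν' n (ν' n + 1)) (n + 1))
            + k' • (pp Q μ' n * (H.U (k' - 1) * pp P ν' (n + 1))) := by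
        calc P n * (pp Q μ' n * (H.U k' * pp P ν' (n + 1)))
            = pp Q μ' n * (P n * (H.U k' * pp P ν' (n + 1))) := by
              rw [← mul_assoc, cPnQ'.eq, mul_assoc]
          _ = pp Q μ' n * ((H.U k' * P n + k' • H.U (k' - 1)) * pp P ν' (n + 1)) := by
              rw [← mul_assoc (P n), H.PnU]
          _ = pp Q μ' n * (H.U k' * (P n * pp P ν' (n + 1))
              + k' • (H.U (k' - 1) * pp P ν' (n + 1))) := by
              rw [add_mul, smul_mul_assoc, mul_assoc]
          _ = _ := by rw [c3, mul_add, mul_smul_comm]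
      have hkey : mon Q P Qinv n μ k ν * mon Q P Qinv n μ' k' ν'
          = mon Q P Qinv n μ k (Function.update ν n (ν n - 1))
              * mon Q P Qinv n μ' k' (Function.update ν' n (ν' n + 1))
            + k' • (mon Q P Qinv n μ k (Function.update ν n (ν n - 1))
              * mon Q P Qinv n μ' (k' - 1) ν') := by
        rw [H.mon_eq μ k ν, H.mon_eq μ' k' ν', H.mon_eq μ k _, H.mon_eq μ' k' _,
          H.mon_eq μ' (k' - 1) ν', epeel]
        simp only [mul_assoc]
        rw [hPn]
        simp only [mul_add, mul_smul_comm]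
      rw [hkey]
      have hc1 : ((ν n - 1 : ℕ) : ℤ) = (ν n : ℤ) - 1 := by omega
      have hb1 : bal n μ k (Function.update ν n (ν n - 1))
            + bal n μ' k' (Function.update ν' n (ν' n + 1))
          = bal n μ k ν + bal n μ' k' ν' := by
        rw [bal_update_ν_top μ k ν, bal_update_ν_top μ' k' ν', hc1]
        push_cast
        ring
      have hb2 : bal n μ k (Function.update ν n (ν n - 1))
            + bal n μ' (k' - 1) ν' = bal n μ k ν + bal n μ' k' ν' := by
        rw [bal_update_ν_top μ k ν, hc1, show k' - 1 = k' + (-1) by ring, bal_k]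
        ring
      have m1 := ih _ hsum μ k (Function.update ν n (ν n - 1)) μ' k'
        (Function.update ν' n (ν' n + 1)) rfl
      rw [hb1] at m1
      have m2 := ih _ hsum μ k (Function.update ν n (ν n - 1)) μ' (k' - 1) ν' rfl
      rw [hb2] at m2
      exact add_mem m1 (zsmul_mem m2 k')

/-- `P j` passing across a monomial tail. -/
lemma Ppass {j : ℕ} (hj : j < n) (μ' : ℕ → ℕ) (k' : ℤ) (ν' : ℕ → ℕ) :
    P j * (pp Q μ' n * (H.U k' * pp P ν' (n + 1)))
      = pp Q μ' n * (H.U k' * pp P (Function.update ν' j (ν' j + 1)) (n + 1))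
        + μ' j • (pp Q (Function.update μ' j (μ' j - 1)) n * (H.U k' * pp P ν' (n + 1))) := by
  have c3 : P j * pp P ν' (n + 1) = pp P (Function.update ν' j (ν' j + 1)) (n + 1) :=
    pp_unpeel (by omega) fun i hi => H.cPP (le_of_lt hj) (by omega)
  have hQpass : P j * pp Q μ' n = pp Q μ' n * P j
      + μ' j • pp Q (Function.update μ' j (μ' j - 1)) n :=
    pp_pass hj (fun i hi hij => H.cPQ (le_of_lt hj) (le_of_lt hi) (by omega))
      (p_pow (H.pq (le_of_lt hj)))
  have cU : Commute (P j) (H.U k') := H.cPU hj k'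
  calc P j * (pp Q μ' n * (H.U k' * pp P ν' (n + 1)))
      = (P j * pp Q μ' n) * (H.U k' * pp P ν' (n + 1)) := by rw [mul_assoc]
    _ = pp Q μ' n * (P j * (H.U k' * pp P ν' (n + 1)))
        + μ' j • (pp Q (Function.update μ' j (μ' j - 1)) n * (H.U k' * pp P ν' (n + 1))) := by
        rw [hQpass, add_mul, smul_mul_assoc, mul_assoc]
    _ = _ := by
        rw [← mul_assoc (P j), cU.eq, mul_assoc, c3]

/-- `Q i` absorbing into the `Q`-part. -/
lemma Qabs {i : ℕ} (hi : i < n) (μ' : ℕ → ℕ) (X : A) :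
    Q i * (pp Q μ' n * X) = pp Q (Function.update μ' i (μ' i + 1)) n * X := by
  rw [← mul_assoc, pp_unpeel hi fun i' hi' => H.cQQ (le_of_lt hi) (le_of_lt (by omega))]

/-- generators of the algebra. -/
lemma gen_mem (G : Set A)
    (hQnPn : Q n * P n ∈ G)
    (hQP : ∀ i < n, ∀ j < n, Q i * P j ∈ G)
    (hQQQ : ∀ i < n, ∀ j < n, Q i * Q j * Q n ∈ G)
    (hPPQ : ∀ i < n, ∀ j < n, P i * P j * Qinv ∈ G) :
    ∀ (M : ℕ) (μ : ℕ → ℕ) (k : ℤ) (ν : ℕ → ℕ),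
    (∑ i ∈ Finset.range n, μ i) + (∑ i ∈ Finset.range (n + 1), ν i) + k.natAbs = M →
    bal n μ k ν = 0 →
    mon Q P Qinv n μ k ν ∈ Algebra.adjoin ℂ G := by
  intro M
  induction M using Nat.strong_induction_on with
  | _ M ih =>
  intro μ k ν hM hbal
  by_cases hμe : ∃ i < n, μ i ≠ 0
  · obtain ⟨i, hi, hμi⟩ := hμe
    by_cases hνe : ∃ j < n, ν j ≠ 0
    · -- strip Q i * P j
      obtain ⟨j, hj, hνj⟩ := hνe
      have hppν : pp P (Function.update (Function.update ν j (ν j - 1)) j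
            ((Function.update ν j (ν j - 1)) j + 1)) (n + 1) = pp P ν (n + 1) :=
        pp_congr fun l hl => by
          rcases eq_or_ne l j with h | h
          · subst h
            rw [Function.update_self, Function.update_self]
            omega
          · rw [Function.update_of_ne h, Function.update_of_ne h]
      have hppμ : pp Q (Function.update (Function.update μ i (μ i - 1)) i
            ((Function.update μ i (μ i - 1)) i + 1)) n = pp Q μ n :=
        pp_congr fun l hl => by
          rcases eq_or_ne l i with h | h
          · subst h
            rw [Function.update_self, Function.update_self]
            omega
          · rw [Function.update_of_ne h, Function.update_of_ne h]
      have key : (Q i * P j) * mon Q P Qinv n (Function.update μ i (μ i - 1)) k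
            (Function.update ν j (ν j - 1))
          = mon Q P Qinv n μ k ν
            + (Function.update μ i (μ i - 1)) j • mon Q P Qinv n
              (Function.update (Function.update (Function.update μ i (μ i - 1)) j
                ((Function.update μ i (μ i - 1)) j - 1)) i
                ((Function.update (Function.update μ i (μ i - 1)) j
                  ((Function.update μ i (μ i - 1)) j - 1)) i + 1)) k
              (Function.update ν j (ν j - 1)) := by
        rw [H.mon_eq (Function.update μ i (μ i - 1)) k (Function.update ν j (ν j - 1)),
          H.mon_eq μ k ν,
          H.mon_eq (Function.update (Function.update (Function.update μ i (μ i - 1)) j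
              ((Function.update μ i (μ i - 1)) j - 1)) i
              ((Function.update (Function.update μ i (μ i - 1)) j
                ((Function.update μ i (μ i - 1)) j - 1)) i + 1)) k
            (Function.update ν j (ν j - 1))]
        simp only [mul_assoc]
        rw [H.Ppass hj, mul_add, mul_smul_comm, H.Qabs hi, H.Qabs hi, hppν, hppμ]
      have hx : mon Q P Qinv n (Function.update μ i (μ i - 1)) k
          (Function.update ν j (ν j - 1)) ∈ Algebra.adjoin ℂ G := by
        apply ih _ ?_ _ _ _ rfl ?_
        · have e1 := sum_update_nat μ hi (μ i - 1)
          have e2 := sum_update_nat ν (show j < n + 1 by omega) (ν j - 1)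
          omega
        · rw [bal_update_μ μ k _ hi, bal_update_ν μ k ν hj, hbal]
          omega
      have hgx : (Q i * P j) * mon Q P Qinv n (Function.update μ i (μ i - 1)) k
          (Function.update ν j (ν j - 1)) ∈ Algebra.adjoin ℂ G :=
        mul_mem (Algebra.subset_adjoin (hQP i hi j hj)) hx
      rw [show mon Q P Qinv n μ k ν
          = (Q i * P j) * mon Q P Qinv n (Function.update μ i (μ i - 1)) k
              (Function.update ν j (ν j - 1))
            - (Function.update μ i (μ i - 1)) j • mon Q P Qinv n
              (Function.update (Function.update (Function.update μ i (μ i - 1)) j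
                ((Function.update μ i (μ i - 1)) j - 1)) i
                ((Function.update (Function.update μ i (μ i - 1)) j
                  ((Function.update μ i (μ i - 1)) j - 1)) i + 1)) k
              (Function.update ν j (ν j - 1)) from by rw [key]; abel]
      by_cases hz : (Function.update μ i (μ i - 1)) j = 0
      · rw [hz, zero_smul, sub_zero]
        exact hgx
      · have hy : mon Q P Qinv n
            (Function.update (Function.update (Function.update μ i (μ i - 1)) j
              ((Function.update μ i (μ i - 1)) j - 1)) i
              ((Function.update (Function.update μ i (μ i - 1)) j
                ((Function.update μ i (μ i - 1)) j - 1)) i + 1)) k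
            (Function.update ν j (ν j - 1)) ∈ Algebra.adjoin ℂ G := by
          apply ih _ ?_ _ _ _ rfl ?_
          · have e1 := sum_update_nat μ hi (μ i - 1)
            have e2 := sum_update_nat ν (show j < n + 1 by omega) (ν j - 1)
            have e3 := sum_update_nat (Function.update μ i (μ i - 1)) hj
              ((Function.update μ i (μ i - 1)) j - 1)
            have e4 := sum_update_nat (Function.update (Function.update μ i (μ i - 1)) j
              ((Function.update μ i (μ i - 1)) j - 1)) hi
              ((Function.update (Function.update μ i (μ i - 1)) j
                ((Function.update μ i (μ i - 1)) j - 1)) i + 1)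
            omega
          · rw [bal_update_μ _ k _ hi, bal_update_μ _ k _ hj, bal_update_μ μ k _ hi,
              bal_update_ν μ k ν hj, hbal]
            omega
        exact sub_mem hgx (nsmul_mem hy _)
    · -- no ν below n : strip Q i * Q j * Q n
      push_neg at hνe
      have hsν : ∑ l ∈ Finset.range n, ((ν l : ℕ) : ℤ) = 0 :=
        Finset.sum_eq_zero fun l hl => by
          rw [hνe l (Finset.mem_range.mp hl)]
          rfl
      have hbal' : (∑ l ∈ Finset.range n, ((μ l : ℕ) : ℤ)) - 2 * k + 2 * (ν n : ℤ) = 0 := by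
        rw [bal_eq, hsν] at hbal
        omega
      have hcast : (∑ l ∈ Finset.range n, ((μ l : ℕ) : ℤ))
          = ((∑ l ∈ Finset.range n, μ l : ℕ) : ℤ) := by push_cast; rfl
      have hle : μ i ≤ ∑ l ∈ Finset.range n, μ l :=
        Finset.single_le_sum (fun l _ => Nat.zero_le (μ l)) (Finset.mem_range.mpr hi)
      have e1 := sum_update_nat μ hi (μ i - 1)
      have hsum1 : (∑ l ∈ Finset.range n, Function.update μ i (μ i - 1) l) ≠ 0 := by
        omega
      obtain ⟨j, hjmem, hμ1j⟩ := Finset.exists_ne_zero_of_sum_ne_zero hsum1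
      have hj : j < n := Finset.mem_range.mp hjmem
      have hppμ1 : pp Q (Function.update (Function.update (Function.update μ i (μ i - 1)) j
            ((Function.update μ i (μ i - 1)) j - 1)) j
            ((Function.update (Function.update μ i (μ i - 1)) j
              ((Function.update μ i (μ i - 1)) j - 1)) j + 1)) n
          = pp Q (Function.update μ i (μ i - 1)) n :=
        pp_congr fun l hl => by
          rcases eq_or_ne l j with h | h
          · subst h
            rw [Function.update_self, Function.update_self]
            omega
          · rw [Function.update_of_ne h, Function.update_of_ne h]
      have hppμ : pp Q (Function.update (Function.update μ i (μ i - 1)) i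
            ((Function.update μ i (μ i - 1)) i + 1)) n = pp Q μ n :=
        pp_congr fun l hl => by
          rcases eq_or_ne l i with h | h
          · subst h
            rw [Function.update_self, Function.update_self]
            omega
          · rw [Function.update_of_ne h, Function.update_of_ne h]
      have cQn : Commute (Q n) (pp Q (Function.update (Function.update μ i (μ i - 1)) j
          ((Function.update μ i (μ i - 1)) j - 1)) n) :=
        commute_pp fun l hl => H.cQQ le_rfl (le_of_lt hl)
      have key : mon Q P Qinv n μ k ν
          = (Q i * Q j * Q n) * mon Q P Qinv n
            (Function.update (Function.update μ i (μ i - 1)) j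
              ((Function.update μ i (μ i - 1)) j - 1)) (k - 1) ν := by
        rw [H.mon_eq μ k ν, H.mon_eq (Function.update (Function.update μ i (μ i - 1)) j
          ((Function.update μ i (μ i - 1)) j - 1)) (k - 1) ν]
        simp only [mul_assoc]
        rw [← mul_assoc (Q n), cQn.eq, mul_assoc, ← mul_assoc (Q n), ← H.U_one,
          H.U_mul, show (1 : ℤ) + (k - 1) = k by ring, H.Qabs hj, hppμ1,
          H.Qabs hi, hppμ]
      rw [key]
      have hx : mon Q P Qinv n (Function.update (Function.update μ i (μ i - 1)) j
          ((Function.update μ i (μ i - 1)) j - 1)) (k - 1) ν ∈ Algebra.adjoin ℂ G := by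
        apply ih _ ?_ _ _ _ rfl ?_
        · have e3 := sum_update_nat (Function.update μ i (μ i - 1)) hj
            ((Function.update μ i (μ i - 1)) j - 1)
          omega
        · rw [bal_update_μ _ (k - 1) ν hj, bal_update_μ μ (k - 1) ν hi,
            show k - 1 = k + (-1) by ring, bal_k, hbal]
          omega
      exact mul_mem (Algebra.subset_adjoin (hQQQ i hi j hj)) hx
  · push_neg at hμe
    have hppQ : pp Q μ n = 1 := pp_zero_exp hμe
    have hsμ : ∑ l ∈ Finset.range n, ((μ l : ℕ) : ℤ) = 0 :=
      Finset.sum_eq_zero fun l hl => by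
        rw [hμe l (Finset.mem_range.mp hl)]
        rfl
    by_cases hνe : ∃ j < n, ν j ≠ 0
    · -- strip P j * P j' * Qinv
      obtain ⟨j, hj, hνj⟩ := hνe
      have hbal' : - (∑ l ∈ Finset.range n, ((ν l : ℕ) : ℤ)) - 2 * k + 2 * (ν n : ℤ) = 0 := by
        rw [bal_eq, hsμ] at hbal
        omega
      have hcast : (∑ l ∈ Finset.range n, ((ν l : ℕ) : ℤ))
          = ((∑ l ∈ Finset.range n, ν l : ℕ) : ℤ) := by push_cast; rfl
      have hle : ν j ≤ ∑ l ∈ Finset.range n, ν l :=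
        Finset.single_le_sum (fun l _ => Nat.zero_le (ν l)) (Finset.mem_range.mpr hj)
      have e1 := sum_update_nat ν hj (ν j - 1)
      have hsum1 : (∑ l ∈ Finset.range n, Function.update ν j (ν j - 1) l) ≠ 0 := by
        omega
      obtain ⟨j', hj'mem, hν1j'⟩ := Finset.exists_ne_zero_of_sum_ne_zero hsum1
      have hj' : j' < n := Finset.mem_range.mp hj'mem
      have hppν1 : pp P (Function.update (Function.update (Function.update ν j (ν j - 1)) j'
            ((Function.update ν j (ν j - 1)) j' - 1)) j'
            ((Function.update (Function.update ν j (ν j - 1)) j'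
              ((Function.update ν j (ν j - 1)) j' - 1)) j' + 1)) (n + 1)
          = pp P (Function.update ν j (ν j - 1)) (n + 1) :=
        pp_congr fun l hl => by
          rcases eq_or_ne l j' with h | h
          · subst h
            rw [Function.update_self, Function.update_self]
            omega
          · rw [Function.update_of_ne h, Function.update_of_ne h]
      have hppν : pp P (Function.update (Function.update ν j (ν j - 1)) j
            ((Function.update ν j (ν j - 1)) j + 1)) (n + 1) = pp P ν (n + 1) :=
        pp_congr fun l hl => by
          rcases eq_or_ne l j with h | h
          · subst h
            rw [Function.update_self, Function.update_self]
            omega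
          · rw [Function.update_of_ne h, Function.update_of_ne h]
      have hup1 : P j' * pp P (Function.update (Function.update ν j (ν j - 1)) j'
            ((Function.update ν j (ν j - 1)) j' - 1)) (n + 1)
          = pp P (Function.update ν j (ν j - 1)) (n + 1) := by
        rw [pp_unpeel (show j' < n + 1 by omega) fun l hl =>
          H.cPP (le_of_lt hj') (by omega), hppν1]
      have hup2 : P j * pp P (Function.update ν j (ν j - 1)) (n + 1) = pp P ν (n + 1) := by
        rw [pp_unpeel (show j < n + 1 by omega) fun l hl =>
          H.cPP (le_of_lt hj) (by omega), hppν]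
      have cU1 : Commute (P j') (H.U k) := H.cPU hj' k
      have cU2 : Commute (P j) (H.U k) := H.cPU hj k
      have key : mon Q P Qinv n μ k ν
          = (P j * P j' * Qinv) * mon Q P Qinv n μ (k + 1)
            (Function.update (Function.update ν j (ν j - 1)) j'
              ((Function.update ν j (ν j - 1)) j' - 1)) := by
        rw [H.mon_eq μ k ν, H.mon_eq μ (k + 1)
          (Function.update (Function.update ν j (ν j - 1)) j'
            ((Function.update ν j (ν j - 1)) j' - 1)), hppQ, one_mul, one_mul]
        rw [mul_assoc, mul_assoc, ← mul_assoc Qinv, H.Uinv_mul,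
          show (-1 : ℤ) + (k + 1) = k by ring, ← mul_assoc (P j'), cU1.eq,
          mul_assoc (H.U k), hup1, ← mul_assoc (P j), cU2.eq, mul_assoc (H.U k), hup2]
      rw [key]
      have hx : mon Q P Qinv n μ (k + 1)
          (Function.update (Function.update ν j (ν j - 1)) j'
            ((Function.update ν j (ν j - 1)) j' - 1)) ∈ Algebra.adjoin ℂ G := by
        apply ih _ ?_ _ _ _ rfl ?_
        · have e2 := sum_update_nat ν (show j < n + 1 by omega) (ν j - 1)
          have e3 := sum_update_nat (Function.update ν j (ν j - 1))
            (show j' < n + 1 by omega) ((Function.update ν j (ν j - 1)) j' - 1)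
          omega
        · rw [bal_update_ν μ (k + 1) _ hj', bal_update_ν μ (k + 1) ν hj, bal_k, hbal]
          omega
      exact mul_mem (Algebra.subset_adjoin (hPPQ j hj j' hj')) hx
    · -- only `Q n`, `P n` remain
      push_neg at hνe
      have hsν : ∑ l ∈ Finset.range n, ((ν l : ℕ) : ℤ) = 0 :=
        Finset.sum_eq_zero fun l hl => by
          rw [hνe l (Finset.mem_range.mp hl)]
          rfl
      have hkc : k = (ν n : ℤ) := by
        rw [bal_eq, hsμ, hsν] at hbal
        omega
      by_cases hc : ν n = 0
      · have hppν : pp P ν (n + 1) = 1 :=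
          pp_zero_exp fun l hl => by
            rcases Nat.lt_succ_iff_lt_or_eq.mp hl with h | h
            · exact hνe l h
            · rw [h]; exact hc
        have : mon Q P Qinv n μ k ν = 1 := by
          rw [H.mon_eq μ k ν, hppQ, hppν, one_mul, mul_one,
            show k = 0 by rw [hkc, hc]; rfl, H.U_zero]
        rw [this]
        exact one_mem _
      · -- strip Q n * P n
        have hppν : pp P (Function.update (Function.update ν n (ν n - 1)) n
              ((Function.update ν n (ν n - 1)) n + 1)) (n + 1) = pp P ν (n + 1) :=
          pp_congr fun l hl => by
            rcases eq_or_ne l n with h | h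
            · subst h
              rw [Function.update_self, Function.update_self]
              omega
            · rw [Function.update_of_ne h, Function.update_of_ne h]
        have hup : P n * pp P (Function.update ν n (ν n - 1)) (n + 1) = pp P ν (n + 1) := by
          rw [pp_unpeel (Nat.lt_succ_self n) fun l hl => H.cPP le_rfl (le_of_lt hl), hppν]
        have key : (Q n * P n) * mon Q P Qinv n μ (k - 1) (Function.update ν n (ν n - 1))
            = mon Q P Qinv n μ k ν
              + (k - 1) • mon Q P Qinv n μ (k - 1) (Function.update ν n (ν n - 1)) := by
          rw [H.mon_eq μ (k - 1) (Function.update ν n (ν n - 1)), H.mon_eq μ k ν,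
            hppQ, one_mul, one_mul]
          rw [mul_assoc, ← mul_assoc (P n), H.PnU (k - 1), add_mul, smul_mul_assoc,
            mul_add, mul_smul_comm, mul_assoc (H.U (k - 1)), hup,
            ← mul_assoc (Q n), ← H.U_one, H.U_mul, show (1 : ℤ) + (k - 1) = k by ring,
            ← mul_assoc (H.U 1), H.U_mul,
            show (1 : ℤ) + (k - 1 - 1) = k - 1 by ring]
        have hx : mon Q P Qinv n μ (k - 1) (Function.update ν n (ν n - 1))
            ∈ Algebra.adjoin ℂ G := by
          apply ih _ ?_ _ _ _ rfl ?_
          · have e2 := sum_update_nat ν (show n < n + 1 by omega) (ν n - 1)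
            omega
          · rw [bal_update_ν_top μ (k - 1) ν, show k - 1 = k + (-1) by ring,
              bal_k, hbal]
            omega
        rw [show mon Q P Qinv n μ k ν
            = (Q n * P n) * mon Q P Qinv n μ (k - 1) (Function.update ν n (ν n - 1))
              - (k - 1) • mon Q P Qinv n μ (k - 1) (Function.update ν n (ν n - 1)) from by
          rw [key]; abel]
        exact sub_mem (mul_mem (Algebra.subset_adjoin hQnPn) hx) (zsmul_mem hx _)

/-- the span of balance-zero monomials is closed under multiplication. -/
lemma DD_mul {x y : A} (hx : x ∈ DD Q P Qinv n 0) (hy : y ∈ DD Q P Qinv n 0) :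
    x * y ∈ DD Q P Qinv n 0 := by
  have h1 : x * y ∈ DD Q P Qinv n 0 * DD Q P Qinv n 0 := Submodule.mul_mem_mul hx hy
  rw [DD, Submodule.span_mul_span] at h1
  refine Submodule.span_le.mpr ?_ h1
  rintro a ⟨a1, ⟨μ, k, ν, hb, rfl⟩, a2, ⟨μ', k', ν', hb', rfl⟩, rfl⟩
  have := H.monMul_mem _ μ k ν μ' k' ν' rfl
  rw [hb, hb', add_zero] at this
  exact this

end Hyp
end Main
end Stmt11Aux


open Stmt11Aux

/-- In the localized Weyl algebra `A_{n+1}(ℂ)[Q_{n+1}^{-1}]`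
(0-based indexing: the paper's `Q_i` is `Q (i-1)`, `Q_{n+1}` is `Q n`, with
inverse `Qinv`), the ℂ-span `𝒟` of the differential monomials `Q^μ P^ν` with
`μ ∈ ℕ^n × ℤ`, `ν ∈ ℕ^{n+1}` and `∑_{i=1}^n (μ_i − ν_i) − 2(μ_{n+1} − ν_{n+1}) = 0`
is generated as a ℂ-algebra by `1` and the elements
`Q_iP_j, Q_{n+1}P_{n+1}, Q_iQ_jQ_{n+1}, P_iP_jQ_{n+1}^{-1}` for `i,j = 1,…,n`. -/
theorem stmt11 (n : ℕ) (hn : 1 ≤ n) (A : Type*) [Ring A] [Algebra ℂ A]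
    (Q P : ℕ → A) (Qinv : A)
    (hPQ : ∀ i ≤ n, ∀ j ≤ n, P i * Q j - Q j * P i = if i = j then 1 else 0)
    (hQQ : ∀ i ≤ n, ∀ j ≤ n, Q i * Q j = Q j * Q i)
    (hPP : ∀ i ≤ n, ∀ j ≤ n, P i * P j = P j * P i)
    (hinv : Q n * Qinv = 1) (hinv' : Qinv * Q n = 1)
    (hinvQ : ∀ i < n, Commute Qinv (Q i))
    (hinvP : ∀ i < n, Commute Qinv (P i)) :
    (Algebra.adjoin ℂ
      ({Q n * P n} ∪
        {a : A | ∃ i < n, ∃ j < n, a = Q i * P j} ∪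
        {a : A | ∃ i < n, ∃ j < n, a = Q i * Q j * Q n} ∪
        {a : A | ∃ i < n, ∃ j < n, a = P i * P j * Qinv})).toSubmodule =
    Submodule.span ℂ
      {a : A | ∃ (μ : ℕ → ℕ) (k : ℤ) (ν : ℕ → ℕ),
        ((∑ i ∈ Finset.range n, ((μ i : ℤ) - (ν i : ℤ))) -
          2 * (k - (ν n : ℤ)) = 0) ∧
        a = ((List.range n).map fun i => Q i ^ μ i).prod *
            zmonPow (Q n) Qinv k *
            ((List.range (n + 1)).map fun i => P i ^ ν i).prod} := by
  have H : Hyp Q P Qinv n := ⟨hPQ, hQQ, hPP, hinv, hinv', hinvQ, hinvP⟩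
  set G : Set A := {Q n * P n} ∪
      {a : A | ∃ i < n, ∃ j < n, a = Q i * P j} ∪
      {a : A | ∃ i < n, ∃ j < n, a = Q i * Q j * Q n} ∪
      {a : A | ∃ i < n, ∃ j < n, a = P i * P j * Qinv} with hG
  have hspan : Submodule.span ℂ
      {a : A | ∃ (μ : ℕ → ℕ) (k : ℤ) (ν : ℕ → ℕ),
        ((∑ i ∈ Finset.range n, ((μ i : ℤ) - (ν i : ℤ))) -
          2 * (k - (ν n : ℤ)) = 0) ∧
        a = ((List.range n).map fun i => Q i ^ μ i).prod *
            zmonPow (Q n) Qinv k *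
            ((List.range (n + 1)).map fun i => P i ^ ν i).prod}
      = DD Q P Qinv n 0 := rfl
  rw [hspan]
  -- monomial representations of the generators
  have g1 : Q n * P n = mon Q P Qinv n (fun _ => 0) 1 (Function.update (fun _ => 0) n 1) := by
    rw [H.mon_eq, pp_zero_exp fun i _ => rfl, one_mul, H.U_one,
      pp_single (Nat.lt_succ_self n) fun i h1 h2 => absurd h2 (by omega)]
  have g1b : bal n (fun _ => 0) 1 (Function.update (fun _ => 0) n 1) = 0 := by
    rw [bal_eq, Function.update_self]
    have h1 : ∑ l ∈ Finset.range n, (((fun _ => 0 : ℕ → ℕ) l : ℕ) : ℤ) = 0 := by simp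
    have h2 : ∑ l ∈ Finset.range n, ((Function.update (fun _ => 0) n 1 l : ℕ) : ℤ) = 0 :=
      Finset.sum_eq_zero fun l hl => by
        rw [Function.update_of_ne (Nat.ne_of_lt (Finset.mem_range.mp hl))]
        simp
    rw [h1, h2]
    ring
  have g2 : ∀ i < n, ∀ j < n, Q i * P j
      = mon Q P Qinv n (Function.update (fun _ => 0) i 1) 0 (Function.update (fun _ => 0) j 1) := by
    intro i hi j hj
    rw [H.mon_eq, H.U_zero, mul_one,
      pp_single hi fun a h1 h2 => H.cQQ (le_of_lt hi) (le_of_lt h2),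
      pp_single (show j < n + 1 by omega) fun a h1 h2 => H.cPP (le_of_lt hj) (by omega)]
  have g2b : ∀ i < n, ∀ j < n,
      bal n (Function.update (fun _ => 0) i 1) 0 (Function.update (fun _ => 0) j 1) = 0 := by
    intro i hi j hj
    rw [bal_eq, sum_cast_single hi, sum_cast_single hj,
      Function.update_of_ne (show n ≠ j by omega)]
    norm_num
  have g3 : ∀ i < n, ∀ j < n, Q i * Q j * Q n
      = mon Q P Qinv n
          (fun l => Function.update (fun _ => 0) i 1 l + Function.update (fun _ => 0) j 1 l)
          1 (fun _ => 0) := by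
    intro i hi j hj
    rw [H.mon_eq, pp_zero_exp fun l _ => rfl, mul_one, H.U_one,
      pp_double hi hj fun a ha b hb => H.cQQ (le_of_lt ha) (le_of_lt hb)]
  have g3b : ∀ i < n, ∀ j < n,
      bal n (fun l => Function.update (fun _ => 0) i 1 l + Function.update (fun _ => 0) j 1 l)
        1 (fun _ => 0) = 0 := by
    intro i hi j hj
    rw [bal_eq]
    have h1 : ∑ l ∈ Finset.range n,
        ((Function.update (fun _ => 0) i 1 l + Function.update (fun _ => 0) j 1 l : ℕ) : ℤ)
        = 2 := by
      push_cast
      rw [Finset.sum_add_distrib, sum_cast_single hi, sum_cast_single hj]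
      norm_num
    have h2 : ∑ l ∈ Finset.range n, (((fun _ => 0 : ℕ → ℕ) l : ℕ) : ℤ) = 0 := by simp
    rw [h1, h2]
    norm_num
  have g4 : ∀ i < n, ∀ j < n, P i * P j * Qinv
      = mon Q P Qinv n (fun _ => 0) (-1)
          (fun l => Function.update (fun _ => 0) i 1 l + Function.update (fun _ => 0) j 1 l) := by
    intro i hi j hj
    rw [H.mon_eq, pp_zero_exp fun l _ => rfl, one_mul, H.U_negone,
      pp_double (show i < n + 1 by omega) (show j < n + 1 by omega)
        fun a ha b hb => H.cPP (by omega) (by omega),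
      ((H.hinvP i hi).mul_right (H.hinvP j hj)).eq, mul_assoc]
  have g4b : ∀ i < n, ∀ j < n,
      bal n (fun _ => 0) (-1)
        (fun l => Function.update (fun _ => 0) i 1 l + Function.update (fun _ => 0) j 1 l) = 0 := by
    intro i hi j hj
    rw [bal_eq]
    have h1 : ∑ l ∈ Finset.range n,
        ((Function.update (fun _ => 0) i 1 l + Function.update (fun _ => 0) j 1 l : ℕ) : ℤ)
        = 2 := by
      push_cast
      rw [Finset.sum_add_distrib, sum_cast_single hi, sum_cast_single hj]
      norm_num
    have h2 : ∑ l ∈ Finset.range n, (((fun _ => 0 : ℕ → ℕ) l : ℕ) : ℤ) = 0 := by simp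
    have h3 : (Function.update (fun _ => 0) i 1 n + Function.update (fun _ => 0) j 1 n : ℕ) = 0 := by
      rw [Function.update_of_ne (show n ≠ i by omega), Function.update_of_ne (show n ≠ j by omega)]
    rw [h1, h2, h3]
    norm_num
  have hone : (1 : A) ∈ DD Q P Qinv n 0 := by
    have e : mon Q P Qinv n (fun _ => 0) 0 (fun _ => 0) = 1 := by
      rw [H.mon_eq, pp_zero_exp fun i _ => rfl, pp_zero_exp fun i _ => rfl, H.U_zero,
        one_mul, one_mul]
    have b : bal n (fun _ => 0) 0 (fun _ => 0) = 0 := by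
      rw [bal_eq]
      simp
    rw [← e]
    exact mem_DD _ _ _ b
  apply le_antisymm
  · intro x hx
    rw [Subalgebra.mem_toSubmodule] at hx
    induction hx using Algebra.adjoin_induction with
    | mem a ha =>
        rcases ha with ((h | h) | h) | h
        · rw [Set.mem_singleton_iff] at h
          subst h
          rw [g1]
          exact mem_DD _ _ _ g1b
        · obtain ⟨i, hi, j, hj, rfl⟩ := h
          rw [g2 i hi j hj]
          exact mem_DD _ _ _ (g2b i hi j hj)
        · obtain ⟨i, hi, j, hj, rfl⟩ := h
          rw [g3 i hi j hj]
          exact mem_DD _ _ _ (g3b i hi j hj)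
        · obtain ⟨i, hi, j, hj, rfl⟩ := h
          rw [g4 i hi j hj]
          exact mem_DD _ _ _ (g4b i hi j hj)
    | algebraMap r =>
        rw [Algebra.algebraMap_eq_smul_one]
        exact Submodule.smul_mem _ r hone
    | add x y hx hy hx' hy' => exact add_mem hx' hy'
    | mul x y hx hy hx' hy' => exact H.DD_mul hx' hy'
  · rw [DD, Submodule.span_le]
    rintro a ⟨μ, k, ν, hb, rfl⟩
    rw [SetLike.mem_coe, Subalgebra.mem_toSubmodule]
    refine H.gen_mem G ?_ ?_ ?_ ?_ _ μ k ν rfl hb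
    · exact Set.mem_union_left _ (Set.mem_union_left _ (Set.mem_union_left _ rfl))
    · intro i hi j hj
      exact Set.mem_union_left _ (Set.mem_union_left _ (Set.mem_union_right _ ⟨i, hi, j, hj, rfl⟩))
    · intro i hi j hj
      exact Set.mem_union_left _ (Set.mem_union_right _ ⟨i, hi, j, hj, rfl⟩)
    · intro i hi j hj
      exact Set.mem_union_right _ ⟨i, hi, j, hj, rfl⟩
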